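/- Let h ∈ (1,2) and A > 0. Define C_h(s,t) = s^h + t^h − (1/2)[(s+t)^h + |s−t|^h] and e(s,t) = A·C_h(s,t). Fix 0 ≤ u < v ≤ s < t and define R(τ) = e(v, t+τ) − e(v, s+τ) − e(u, t+τ) + e(u, s+τ) for τ > 0. Then lim_{τ→∞} τ^{3−h} R(τ) = A · (h(h−1)(2−h)/2) · (v² − u²)(t−s); in particular R(τ) decays at the polynomial rate τ^{h−3}. -/

import Mathlib

open Filter Real Topology

/-- Covariance of the sub-fractional Brownian motion. -/
noncomputable def subCov (h s t : ℝ) : ℝ :=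
  s ^ h + t ^ h - (1/2) * ((s + t) ^ h + |s - t| ^ h)

/-- Covariance of the limit Gaussian process in the case `B = 0`. -/
noncomputable def eCov0 (h A s t : ℝ) : ℝ := A * subCov h s t


lemma hd_term (p x : ℝ) {y : ℝ} (hy : 0 < 1 + x * y) :
    HasDerivAt (fun z : ℝ => (1 + x * z) ^ p) (x * p * (1 + x * y) ^ (p - 1)) y := by
  have h1 : HasDerivAt (fun z : ℝ => 1 + x * z) x y := by
    simpa using ((hasDerivAt_id y).const_mul x).const_add 1
  exact h1.rpow_const (Or.inl (ne_of_gt hy))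

lemma hd_sum {n : ℕ} (d x : Fin n → ℝ) (q : ℝ) {y : ℝ} (hy : ∀ i, 0 < 1 + x i * y) :
    HasDerivAt (fun z : ℝ => ∑ i, d i * (1 + x i * z) ^ q)
      (∑ i, d i * x i * q * (1 + x i * y) ^ (q - 1)) y := by
  apply HasDerivAt.fun_sum
  intro i _
  have := (hd_term q (x i) (hy i)).const_mul (d i)
  exact this.congr_deriv (by ring)

lemma tendsto_at0 {n : ℕ} (d x : Fin n → ℝ) (q : ℝ) :
    Tendsto (fun y : ℝ => ∑ i, d i * (1 + x i * y) ^ q) (𝓝[>] (0:ℝ)) (𝓝 (∑ i, d i)) := by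
  have hy : ∀ i, 0 < 1 + x i * (0:ℝ) := by intro i; simp
  have h1 : Tendsto (fun y : ℝ => ∑ i, d i * (1 + x i * y) ^ q) (𝓝[>] (0:ℝ))
      (𝓝 (∑ i, d i * (1 + x i * (0:ℝ)) ^ q)) :=
    (hd_sum d x q hy).continuousAt.tendsto.mono_left nhdsWithin_le_nhds
  simpa using h1

lemma aux_main (h : ℝ) {n : ℕ} (c x : Fin n → ℝ)
    (S0 : ∑ i, c i = 0)
    (S1 : ∑ i, c i * x i = 0)
    (S2 : ∑ i, c i * x i ^ 2 = 0) :
    Tendsto (fun y : ℝ => (∑ i, c i * (1 + x i * y) ^ h) / y ^ 3) (𝓝[>] (0:ℝ))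
      (𝓝 (h * (h - 1) * (h - 2) / 6 * ∑ i, c i * x i ^ 3)) := by
  have hpos : ∀ᶠ y : ℝ in 𝓝[>] (0:ℝ), ∀ i, 0 < 1 + x i * y := by
    rw [eventually_all]
    intro i
    have ht : Tendsto (fun y : ℝ => 1 + x i * y) (𝓝[>] (0:ℝ)) (𝓝 (1 + x i * 0)) :=
      ((continuous_const.add (continuous_const.mul continuous_id)).tendsto 0).mono_left
        nhdsWithin_le_nhds
    have ht' : Tendsto (fun y : ℝ => 1 + x i * y) (𝓝[>] (0:ℝ)) (𝓝 1) := by simpa using ht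
    exact ht'.eventually (eventually_gt_nhds one_pos)
  have hy0 : ∀ᶠ y : ℝ in 𝓝[>] (0:ℝ), 0 < y := self_mem_nhdsWithin
  -- the derivative ladder
  set f1 : ℝ → ℝ := fun y => ∑ i, c i * x i * h * (1 + x i * y) ^ (h - 1) with hf1
  set f2 : ℝ → ℝ := fun y => ∑ i, c i * x i * h * x i * (h - 1) * (1 + x i * y) ^ (h - 1 - 1)
    with hf2
  set f3 : ℝ → ℝ := fun y =>
      ∑ i, c i * x i * h * x i * (h - 1) * x i * (h - 1 - 1) * (1 + x i * y) ^ (h - 1 - 1 - 1)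
    with hf3
  have hd0 : ∀ᶠ y : ℝ in 𝓝[>] (0:ℝ),
      HasDerivAt (fun z : ℝ => ∑ i, c i * (1 + x i * z) ^ h) (f1 y) y :=
    hpos.mono fun y hy => hd_sum c x h hy
  have hd1 : ∀ᶠ y : ℝ in 𝓝[>] (0:ℝ), HasDerivAt f1 (f2 y) y :=
    hpos.mono fun y hy => hd_sum (fun i => c i * x i * h) x (h - 1) hy
  have hd2 : ∀ᶠ y : ℝ in 𝓝[>] (0:ℝ), HasDerivAt f2 (f3 y) y :=
    hpos.mono fun y hy => hd_sum (fun i => c i * x i * h * x i * (h - 1)) x (h - 1 - 1) hy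
  -- limits of numerators at 0
  have t0 : Tendsto (fun y : ℝ => ∑ i, c i * (1 + x i * y) ^ h) (𝓝[>] (0:ℝ)) (𝓝 0) := by
    have := tendsto_at0 c x h
    rwa [S0] at this
  have t1 : Tendsto f1 (𝓝[>] (0:ℝ)) (𝓝 0) := by
    have := tendsto_at0 (fun i => c i * x i * h) x (h - 1)
    have e : ∑ i, c i * x i * h = 0 := by
      have : ∑ i, c i * x i * h = (∑ i, c i * x i) * h := by
        rw [Finset.sum_mul]
      rw [this, S1, zero_mul]
    rwa [e] at this
  have t2 : Tendsto f2 (𝓝[>] (0:ℝ)) (𝓝 0) := by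
    have := tendsto_at0 (fun i => c i * x i * h * x i * (h - 1)) x (h - 1 - 1)
    have e : ∑ i, c i * x i * h * x i * (h - 1) = 0 := by
      have : ∑ i, c i * x i * h * x i * (h - 1) = (∑ i, c i * x i ^ 2) * (h * (h - 1)) := by
        rw [Finset.sum_mul]; exact Finset.sum_congr rfl fun i _ => by ring
      rw [this, S2, zero_mul]
    rwa [e] at this
  have t3 : Tendsto f3 (𝓝[>] (0:ℝ))
      (𝓝 (h * (h - 1) * (h - 2) * ∑ i, c i * x i ^ 3)) := by
    have := tendsto_at0 (fun i => c i * x i * h * x i * (h - 1) * x i * (h - 1 - 1)) x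
      (h - 1 - 1 - 1)
    have e : ∑ i, c i * x i * h * x i * (h - 1) * x i * (h - 1 - 1)
        = h * (h - 1) * (h - 2) * ∑ i, c i * x i ^ 3 := by
      rw [Finset.mul_sum]; exact Finset.sum_congr rfl fun i _ => by ring
    rwa [e] at this
  -- innermost quotient limit
  have L2 : Tendsto (fun y : ℝ => f2 y / (6 * y)) (𝓝[>] (0:ℝ))
      (𝓝 (h * (h - 1) * (h - 2) / 6 * ∑ i, c i * x i ^ 3)) := by
    apply HasDerivAt.lhopital_zero_nhdsGT hd2
      (g' := fun _ => (6:ℝ))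
      (Filter.Eventually.of_forall fun y => by
        simpa using ((hasDerivAt_id y).const_mul (6:ℝ)))
      (Filter.Eventually.of_forall fun y => by norm_num)
      t2
      (by
        have : Tendsto (fun y : ℝ => 6 * y) (𝓝 (0:ℝ)) (𝓝 (6 * 0)) :=
          (continuous_const.mul continuous_id).tendsto 0
        simpa using this.mono_left nhdsWithin_le_nhds)
    have := t3.div_const 6
    convert this using 2
    ring
  have L1 : Tendsto (fun y : ℝ => f1 y / (3 * y ^ 2)) (𝓝[>] (0:ℝ))
      (𝓝 (h * (h - 1) * (h - 2) / 6 * ∑ i, c i * x i ^ 3)) := by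
    apply HasDerivAt.lhopital_zero_nhdsGT hd1
      (g' := fun y => 6 * y)
      (Filter.Eventually.of_forall fun y => by
        have := (hasDerivAt_pow 2 y).const_mul (3:ℝ)
        exact this.congr_deriv (by push_cast; ring))
      (hy0.mono fun y hy => by positivity)
      t1
      (by
        have : Tendsto (fun y : ℝ => 3 * y ^ 2) (𝓝 (0:ℝ)) (𝓝 (3 * 0 ^ 2)) :=
          (continuous_const.mul (continuous_pow 2)).tendsto 0
        simpa using this.mono_left nhdsWithin_le_nhds)
    exact L2
  apply HasDerivAt.lhopital_zero_nhdsGT hd0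
    (g' := fun y => 3 * y ^ 2)
    (Filter.Eventually.of_forall fun y => by
      have := hasDerivAt_pow 3 y
      norm_num at this
      convert this using 1)
    (hy0.mono fun y hy => by positivity)
    t0
    (by
      have : Tendsto (fun y : ℝ => y ^ 3) (𝓝 (0:ℝ)) (𝓝 ((0:ℝ) ^ 3)) :=
        (continuous_pow 3).tendsto 0
      simpa using this.mono_left nhdsWithin_le_nhds)
  exact L1



theorem stmt3 (h A : ℝ) (hh : h ∈ Set.Ioo (1:ℝ) 2) (hA : 0 < A)
    (u v s t : ℝ) (hu : 0 ≤ u) (huv : u < v) (hvs : v ≤ s) (hst : s < t) :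
    Tendsto (fun τ : ℝ => τ ^ (3 - h) *
        (eCov0 h A v (t + τ) - eCov0 h A v (s + τ)
          - eCov0 h A u (t + τ) + eCov0 h A u (s + τ)))
      atTop (nhds (A * (h * (h - 1) * (2 - h) / 2) * (v ^ 2 - u ^ 2) * (t - s))) := by
  set c : Fin 8 → ℝ := ![-(1/2), -(1/2), 1/2, 1/2, 1/2, 1/2, -(1/2), -(1/2)] with hc
  set x : Fin 8 → ℝ := ![v+t, t-v, v+s, s-v, u+t, t-u, u+s, s-u] with hxdef
  have S0 : ∑ i, c i = 0 := by
    simp [Fin.sum_univ_succ, hc]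
  have S1 : ∑ i, c i * x i = 0 := by
    simp [Fin.sum_univ_succ, hc, hxdef]; ring
  have S2 : ∑ i, c i * x i ^ 2 = 0 := by
    simp [Fin.sum_univ_succ, hc, hxdef]; ring
  have S3 : ∑ i, c i * x i ^ 3 = -3 * (v ^ 2 - u ^ 2) * (t - s) := by
    simp [Fin.sum_univ_succ, hc, hxdef]; ring
  have hxnn : ∀ i, 0 ≤ x i := by
    rw [hxdef]
    simp only [Fin.forall_fin_succ, Matrix.cons_val_zero, Matrix.cons_val_succ,
      IsEmpty.forall_iff, and_true]
    refine ⟨?_, ?_, ?_, ?_, ?_, ?_, ?_, ?_⟩ <;> linarith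
  have key := aux_main h c x S0 S1 S2
  have comp : Tendsto (fun τ : ℝ =>
        A * ((∑ i, c i * (1 + x i * τ⁻¹) ^ h) / (τ⁻¹) ^ 3)) atTop
      (𝓝 (A * (h * (h - 1) * (h - 2) / 6 * ∑ i, c i * x i ^ 3))) :=
    (key.comp tendsto_inv_atTop_nhdsGT_zero).const_mul A
  have target_eq : A * (h * (h - 1) * (h - 2) / 6 * ∑ i, c i * x i ^ 3)
      = A * (h * (h - 1) * (2 - h) / 2) * (v ^ 2 - u ^ 2) * (t - s) := by
    rw [S3]; ring
  rw [target_eq] at comp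
  refine Tendsto.congr' ?_ comp
  filter_upwards [eventually_gt_atTop (0:ℝ)] with τ hτ
  -- expand the covariance combination
  have habs1 : |v - (t + τ)| = τ + (t - v) := by
    rw [abs_of_nonpos (by linarith)]; ring
  have habs2 : |v - (s + τ)| = τ + (s - v) := by
    rw [abs_of_nonpos (by linarith)]; ring
  have habs3 : |u - (t + τ)| = τ + (t - u) := by
    rw [abs_of_nonpos (by linarith)]; ring
  have habs4 : |u - (s + τ)| = τ + (s - u) := by
    rw [abs_of_nonpos (by linarith)]; ring
  have hbase1 : v + (t + τ) = τ + (v + t) := by ring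
  have hbase2 : v + (s + τ) = τ + (v + s) := by ring
  have hbase3 : u + (t + τ) = τ + (u + t) := by ring
  have hbase4 : u + (s + τ) = τ + (u + s) := by ring
  have expand : eCov0 h A v (t + τ) - eCov0 h A v (s + τ)
      - eCov0 h A u (t + τ) + eCov0 h A u (s + τ)
      = A * ∑ i, c i * (τ + x i) ^ h := by
    simp only [eCov0, subCov, habs1, habs2, habs3, habs4, hbase1, hbase2, hbase3, hbase4,
      hc, hxdef]
    simp [Fin.sum_univ_succ]
    ring
  have hterm : ∀ i, τ ^ (3 - h) * (τ + x i) ^ h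
      = (1 + x i * τ⁻¹) ^ h / (τ⁻¹) ^ 3 := by
    intro i
    have hb : (0:ℝ) < 1 + x i * τ⁻¹ := by
      have := hxnn i
      have : 0 ≤ x i * τ⁻¹ := by positivity
      linarith
    have hsplit : τ + x i = τ * (1 + x i * τ⁻¹) := by
      field_simp
    rw [hsplit, Real.mul_rpow hτ.le hb.le, ← mul_assoc]
    have h3 : τ ^ (3 - h) * τ ^ h = τ ^ (3:ℕ) := by
      rw [← Real.rpow_natCast τ 3, ← Real.rpow_add hτ]; norm_num
    rw [h3, inv_pow]
    field_simp
  calc A * ((∑ i, c i * (1 + x i * τ⁻¹) ^ h) / (τ⁻¹) ^ 3)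
      = A * ∑ i, c i * ((1 + x i * τ⁻¹) ^ h / (τ⁻¹) ^ 3) := by
        rw [Finset.sum_div]
        congr 1
        exact Finset.sum_congr rfl fun i _ => mul_div_assoc _ _ _
    _ = A * ∑ i, c i * (τ ^ (3 - h) * (τ + x i) ^ h) := by
        congr 1
        exact Finset.sum_congr rfl fun i _ => by rw [hterm i]
    _ = τ ^ (3 - h) * (A * ∑ i, c i * (τ + x i) ^ h) := by
        simp only [Finset.mul_sum]
        exact Finset.sum_congr rfl fun i _ => by ring
    _ = τ ^ (3 - h) * (eCov0 h A v (t + τ) - eCov0 h A v (s + τ)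
          - eCov0 h A u (t + τ) + eCov0 h A u (s + τ)) := by rw [expand]
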